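/- Let a > 1 and define g_a : [0,∞) → ℝ by g_a(x) = 1/(x+1)² for 0 ≤ x ≤ a and g_a(x) = (a+1)^{−2}·exp(−(x−a)/(a+1)) for x > a. Then the function x ↦ log(g_a(x)) is convex on [0,∞), i.e., g_a is log-convex on [0,∞). -/

import Mathlib

open Real

/-- The modification of the Pareto density `f(x) = 1/(x+1)^2` obtained by
replacing its right tail beyond `a` with a matching exponential tail. -/
noncomputable def gA (a : ℝ) (x : ℝ) : ℝ :=
  if x < 0 then 0
  else if x ≤ a then 1 / (x + 1) ^ 2
  else (a + 1) ^ (-2 : ℤ) * Real.exp (-(x - a) / (a + 1))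

/-- Section 5.2: `gA a` is log-convex on `[0, ∞)`. -/
theorem gA_logConvex (a : ℝ) (ha : 1 < a) :
    ConvexOn ℝ (Set.Ici 0) (fun x => Real.log (gA a x)) := by
  have ha1 : (0:ℝ) < a + 1 := by linarith
  set h0 : ℝ → ℝ := fun y => -2 * Real.log (y + 1) + y / (a + 1) with hh0
  -- h0 is convex on Icc 0 a
  have h0conv : ConvexOn ℝ (Set.Icc 0 a) h0 := by
    refine ⟨convex_Icc _ _, ?_⟩
    intro x hx y hy p q hp hq hpq
    simp only [smul_eq_mul, hh0]
    have hx1 : (0:ℝ) < x + 1 := by linarith [hx.1]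
    have hy1 : (0:ℝ) < y + 1 := by linarith [hy.1]
    have hlog := strictConcaveOn_log_Ioi.concaveOn.2 (Set.mem_Ioi.2 hx1)
      (Set.mem_Ioi.2 hy1) hp hq hpq
    simp only [smul_eq_mul] at hlog
    have heq : p * (x + 1) + q * (y + 1) = p * x + q * y + 1 := by
      have : p * (x + 1) + q * (y + 1) = p * x + q * y + (p + q) := by ring
      rw [this, hpq]
    rw [heq] at hlog
    have hlin : (p * x + q * y) / (a + 1) = p * (x / (a+1)) + q * (y / (a+1)) := by ring
    nlinarith [hlog]
  -- h0 is antitone on Icc 0 a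
  have h0anti : AntitoneOn h0 (Set.Icc 0 a) := by
    intro x hx y hy hxy
    simp only [hh0]
    have hx1 : (0:ℝ) < x + 1 := by linarith [hx.1]
    have hy1 : (0:ℝ) < y + 1 := by linarith [hy.1]
    have hlog : Real.log ((x+1)/(y+1)) ≤ (x+1)/(y+1) - 1 :=
      Real.log_le_sub_one_of_pos (by positivity)
    rw [Real.log_div (by linarith) (by linarith)] at hlog
    have h2 : (x+1)/(y+1) - 1 = (x - y)/(y+1) := by field_simp; ring
    rw [h2] at hlog
    -- so log(y+1) - log(x+1) ≥ (y-x)/(y+1) ≥ (y-x)/(a+1)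
    have h3 : (y - x)/(a+1) ≤ (y - x)/(y+1) := by
      apply div_le_div_of_nonneg_left (by linarith) hy1 (by linarith [hy.2])
    have h4 : (y - x)/(y+1) ≤ Real.log (y+1) - Real.log (x+1) := by
      have : (x - y)/(y+1) = -((y-x)/(y+1)) := by ring
      rw [this] at hlog; linarith
    have h5 : (0:ℝ) ≤ (y - x)/(a+1) := div_nonneg (by linarith) ha1.le
    have h6 : y / (a+1) - x/(a+1) = (y - x)/(a+1) := by ring
    nlinarith
  -- min · a is concave on Ici 0
  have hmin : ConcaveOn ℝ (Set.Ici (0:ℝ)) (fun x => min x a) := by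
    refine ⟨convex_Ici _, ?_⟩
    intro x _ y _ p q hp hq hpq
    simp only [smul_eq_mul]
    apply le_min
    · have := min_le_left x a; have := min_le_left y a; nlinarith
    · have := min_le_right x a; have := min_le_right y a; nlinarith
  -- image of Ici 0 under min · a
  have himg : (fun x => min x a) '' Set.Ici (0:ℝ) = Set.Icc 0 a := by
    ext y
    constructor
    · rintro ⟨x, hx, rfl⟩
      exact ⟨le_min hx (by linarith), min_le_right _ _⟩
    · rintro ⟨h1, h2⟩
      exact ⟨y, h1, min_eq_left h2⟩
  have hcomp : ConvexOn ℝ (Set.Ici (0:ℝ)) (h0 ∘ fun x => min x a) :=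
    ConvexOn.comp_concaveOn (by rw [himg]; exact h0conv) hmin (by rw [himg]; exact h0anti)
  have hlin : ConvexOn ℝ (Set.Ici (0:ℝ)) (fun x => -x / (a+1)) := by
    refine ⟨convex_Ici _, ?_⟩
    intro x _ y _ p q hp hq hpq
    simp only [smul_eq_mul]
    exact le_of_eq (by ring)
  have hsum := hlin.add hcomp
  refine hsum.congr ?_
  intro x hx
  simp only [Pi.add_apply, Function.comp_apply, hh0]
  have hx0 : (0:ℝ) ≤ x := hx
  rw [gA]
  rw [if_neg (not_lt.2 hx0)]
  by_cases hxa : x ≤ a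
  · rw [if_pos hxa, min_eq_left hxa]
    rw [one_div, Real.log_inv, Real.log_pow]
    push_cast
    ring
  · rw [if_neg hxa, min_eq_right (le_of_lt (not_le.1 hxa))]
    rw [Real.log_mul (zpow_ne_zero _ (by linarith)) (Real.exp_ne_zero _),
      Real.log_zpow, Real.log_exp]
    push_cast
    field_simp
    ring
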